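/- Let g ≥ 1 and m ≥ 2 be integers, and let x = u_s and y = u_t be two vertices of the outer cycle of H(g, m) whose distance along that cycle is greater than m. Then there exists a cycle in H(g, m) of length at most 2m + 4 that contains both x and y. -/

import Mathlib

open SimpleGraph

def HGraph (g m : ℕ) : SimpleGraph (Fin (2 * (g + 1) * m) ⊕ Fin 2) :=
  SimpleGraph.fromRel (fun u v =>
    (∃ i j : Fin (2 * (g + 1) * m), u = .inl i ∧ v = .inl j ∧
      ((i : ℕ) + 1) % (2 * (g + 1) * m) = (j : ℕ)) ∨
    (∃ (i : Fin (2 * (g + 1) * m)) (j : ℕ), j ≤ g ∧ (i : ℕ) = 2 * j * m ∧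
      u = .inr 0 ∧ v = .inl i) ∨
    (∃ (i : Fin (2 * (g + 1) * m)) (j : ℕ), j ≤ g ∧ (i : ℕ) = (2 * j + 1) * m ∧
      u = .inr 1 ∧ v = .inl i))

namespace Stmt14

variable (g m : ℕ)

/-- the outer-cycle vertex with (cyclic) index `i`. -/
def vtx (hm : 1 ≤ m) (i : ℕ) : Fin (2 * (g + 1) * m) ⊕ Fin 2 :=
  Sum.inl ⟨i % (2 * (g + 1) * m),
    Nat.mod_lt _ (Nat.mul_pos (Nat.mul_pos (by norm_num) (Nat.succ_pos g)) hm)⟩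

/-- the hub whose parity matches `p`. -/
def hub (p : ℕ) : Fin (2 * (g + 1) * m) ⊕ Fin 2 :=
  Sum.inr ⟨p % 2, Nat.mod_lt _ (by norm_num)⟩

variable {g m} (hm : 1 ≤ m)
include hm
set_option linter.unusedSectionVars false

lemma npos : 0 < 2 * (g + 1) * m :=
  Nat.mul_pos (Nat.mul_pos (by norm_num) (Nat.succ_pos g)) hm

lemma n_ge_2m : 2 * m ≤ 2 * (g + 1) * m := by
  calc 2 * m = 2 * 1 * m := by ring
    _ ≤ 2 * (g + 1) * m := Nat.mul_le_mul (Nat.mul_le_mul (le_refl 2) (by omega)) (le_refl m)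

lemma n_ge_4m (hg : 1 ≤ g) : 4 * m ≤ 2 * (g + 1) * m := by
  calc 4 * m = 2 * 2 * m := by ring
    _ ≤ 2 * (g + 1) * m := Nat.mul_le_mul (Nat.mul_le_mul (le_refl 2) (by omega)) (le_refl m)

lemma vtx_eq_iff {i j : ℕ} :
    vtx g m hm i = vtx g m hm j ↔ i % (2 * (g + 1) * m) = j % (2 * (g + 1) * m) := by
  simp [vtx, Fin.ext_iff]

lemma vtx_ne_hub (i p : ℕ) : vtx g m hm i ≠ hub g m p := by simp [vtx, hub]

lemma hub_eq_iff {p q : ℕ} : hub g m p = hub g m q ↔ p % 2 = q % 2 := by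
  simp [hub, Fin.ext_iff]

lemma vtx_coe (s : Fin (2 * (g + 1) * m)) : vtx g m hm (s : ℕ) = Sum.inl s := by
  simp [vtx, Nat.mod_eq_of_lt s.isLt]

lemma vtx_window_inj {x r1 r2 : ℕ} (h1 : r1 < 2 * (g + 1) * m) (h2 : r2 < 2 * (g + 1) * m)
    (h : vtx g m hm (x + r1) = vtx g m hm (x + r2)) : r1 = r2 := by
  rw [vtx_eq_iff] at h
  have h' : r1 % (2 * (g + 1) * m) = r2 % (2 * (g + 1) * m) := Nat.ModEq.add_left_cancel' x h
  rwa [Nat.mod_eq_of_lt h1, Nat.mod_eq_of_lt h2] at h'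

lemma mod_eq_cases {N u v : ℕ} (hu : u ≤ N) (hv : v ≤ N) (h : u % N = v % N) :
    u = v ∨ (u = N ∧ v = 0) ∨ (v = N ∧ u = 0) := by
  rcases Nat.lt_or_ge u N with hu' | hu' <;> rcases Nat.lt_or_ge v N with hv' | hv'
  · rw [Nat.mod_eq_of_lt hu', Nat.mod_eq_of_lt hv'] at h; exact Or.inl h
  · have hv2 : v = N := le_antisymm hv hv'
    subst hv2; rw [Nat.mod_eq_of_lt hu', Nat.mod_self] at h
    right; right; exact ⟨rfl, h⟩
  · have hu2 : u = N := le_antisymm hu hu'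
    subst hu2; rw [Nat.mod_self, Nat.mod_eq_of_lt hv'] at h
    right; left; exact ⟨rfl, h.symm⟩
  · left; omega

lemma two_mul_mod (j : ℕ) :
    (2 * j * m) % (2 * (g + 1) * m) = 2 * (j % (g + 1)) * m := by
  have hj := Nat.div_add_mod j (g + 1)
  have h1 : 2 * j * m = 2 * (g + 1) * m * (j / (g + 1)) + 2 * (j % (g + 1)) * m := by
    calc 2 * j * m = 2 * ((g + 1) * (j / (g + 1)) + j % (g + 1)) * m := by rw [hj]
      _ = 2 * (g + 1) * m * (j / (g + 1)) + 2 * (j % (g + 1)) * m := by ring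
  rw [h1, Nat.mul_add_mod]
  refine Nat.mod_eq_of_lt ?_
  have hjg : j % (g + 1) < g + 1 := Nat.mod_lt _ (by omega)
  calc 2 * (j % (g + 1)) * m < 2 * (j % (g + 1)) * m + m := by omega
    _ = (2 * (j % (g + 1)) + 1) * m := by ring
    _ ≤ 2 * (g + 1) * m := Nat.mul_le_mul (by omega) (le_refl m)

lemma two_mul_add_one_mod (j : ℕ) :
    ((2 * j + 1) * m) % (2 * (g + 1) * m) = (2 * (j % (g + 1)) + 1) * m := by
  have hj := Nat.div_add_mod j (g + 1)
  have h1 : (2 * j + 1) * m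
      = 2 * (g + 1) * m * (j / (g + 1)) + (2 * (j % (g + 1)) + 1) * m := by
    calc (2 * j + 1) * m = (2 * ((g + 1) * (j / (g + 1)) + j % (g + 1)) + 1) * m := by rw [hj]
      _ = 2 * (g + 1) * m * (j / (g + 1)) + (2 * (j % (g + 1)) + 1) * m := by ring
  rw [h1, Nat.mul_add_mod]
  refine Nat.mod_eq_of_lt ?_
  have hjg : j % (g + 1) < g + 1 := Nat.mod_lt _ (by omega)
  calc (2 * (j % (g + 1)) + 1) * m ≤ (2 * g + 1) * m := Nat.mul_le_mul (by omega) (le_refl m)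
    _ < (2 * g + 1) * m + m := by omega
    _ = 2 * (g + 1) * m := by ring

lemma adj_succ (i : ℕ) : (HGraph g m).Adj (vtx g m hm i) (vtx g m hm (i + 1)) := by
  have h2 : 1 < 2 * (g + 1) * m := by have := n_ge_2m (g := g) (m := m); omega
  rw [HGraph, fromRel_adj]
  constructor
  · intro h
    have h0 : (0 : ℕ) = 1 := vtx_window_inj hm (by omega) h2 h
    omega
  · exact Or.inl (Or.inl ⟨⟨i % (2 * (g + 1) * m), Nat.mod_lt _ (npos hm)⟩,
      ⟨(i + 1) % (2 * (g + 1) * m), Nat.mod_lt _ (npos hm)⟩, rfl, rfl, Nat.mod_add_mod i _ 1⟩)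

lemma adj_hub (p : ℕ) : (HGraph g m).Adj (hub g m p) (vtx g m hm (p * m)) := by
  rw [HGraph, fromRel_adj]
  refine ⟨(vtx_ne_hub hm (p * m) p).symm, Or.inl ?_⟩
  rcases Nat.even_or_odd p with ⟨j, hj⟩ | ⟨j, hj⟩
  · have hj2 : p = 2 * j := by omega
    refine Or.inr (Or.inl ⟨⟨(p * m) % (2 * (g + 1) * m), Nat.mod_lt _ (npos hm)⟩,
      j % (g + 1), ?_, ?_, ?_, rfl⟩)
    · have := Nat.mod_lt j (show 0 < g + 1 by omega); omega
    · show (p * m) % (2 * (g + 1) * m) = 2 * (j % (g + 1)) * m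
      rw [hj2]; exact two_mul_mod hm j
    · show hub g m p = Sum.inr 0
      simp only [hub]
      congr 1
      rw [Fin.ext_iff]
      simp [hj2, Nat.mul_mod_right]
  · refine Or.inr (Or.inr ⟨⟨(p * m) % (2 * (g + 1) * m), Nat.mod_lt _ (npos hm)⟩,
      j % (g + 1), ?_, ?_, ?_, rfl⟩)
    · have := Nat.mod_lt j (show 0 < g + 1 by omega); omega
    · show (p * m) % (2 * (g + 1) * m) = (2 * (j % (g + 1)) + 1) * m
      rw [hj]; exact two_mul_add_one_mod hm j
    · show hub g m p = Sum.inr 1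
      simp only [hub]
      congr 1
      rw [Fin.ext_iff]
      simp [hj]



end Stmt14
namespace Stmt14
variable {gg mm : ℕ}

/-- The walk along the outer cycle from `u_i` to `u_{i+k}`. -/
def arcWalk (g m : ℕ) (hm : 1 ≤ m) (i : ℕ) :
    (k : ℕ) → (HGraph g m).Walk (vtx g m hm i) (vtx g m hm (i + k))
  | 0 => SimpleGraph.Walk.nil
  | (k + 1) => (arcWalk g m hm i k).concat (adj_succ hm (i + k))

variable {g m : ℕ} (hm : 1 ≤ m)
include hm
set_option linter.unusedSectionVars false

lemma length_arcWalk (i k : ℕ) : (arcWalk g m hm i k).length = k := by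
  induction k with
  | zero => simp [arcWalk]
  | succ k ih => simp [arcWalk, SimpleGraph.Walk.length_concat, ih]

lemma support_arcWalk (i k : ℕ) :
    (arcWalk g m hm i k).support = (List.range (k + 1)).map (fun r => vtx g m hm (i + r)) := by
  induction k with
  | zero => simp [arcWalk, List.range_succ]
  | succ k ih =>
    simp [arcWalk, SimpleGraph.Walk.support_concat, ih, List.range_succ]

lemma mem_window {x k r : ℕ} (hr : r ≤ k) :
    vtx g m hm (x + r) ∈ (List.range (k + 1)).map (fun r => vtx g m hm (x + r)) :=
  List.mem_map.mpr ⟨r, List.mem_range.mpr (by omega), rfl⟩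

lemma nodup_window (x : ℕ) {k : ℕ} (hk : k < 2 * (g + 1) * m) :
    ((List.range (k + 1)).map (fun r => vtx g m hm (x + r))).Nodup := by
  refine List.Nodup.map_on ?_ List.nodup_range
  intro r1 h1 r2 h2 h
  rw [List.mem_range] at h1 h2
  exact vtx_window_inj hm (by omega) (by omega) h

lemma hub_not_mem_window (p x k : ℕ) :
    hub g m p ∉ (List.range (k + 1)).map (fun r => vtx g m hm (x + r)) := by
  simp [List.mem_map, vtx, hub]

lemma windows_disjoint {p q r1 r2 : ℕ} (hp : p < 2 * (g + 1)) (hq : q < 2 * (g + 1))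
    (hpq : p ≠ q) (h1 : q ≠ p + 1) (h2 : p ≠ q + 1)
    (h3 : ¬(p = 2 * (g + 1) - 1 ∧ q = 0)) (h4 : ¬(q = 2 * (g + 1) - 1 ∧ p = 0))
    (hr1 : r1 ≤ m) (hr2 : r2 ≤ m) :
    vtx g m hm (p * m + r1) ≠ vtx g m hm (q * m + r2) := by
  intro h
  rw [vtx_eq_iff] at h
  have hup : p * m + m ≤ 2 * (g + 1) * m := by
    have : (p + 1) * m ≤ 2 * (g + 1) * m := Nat.mul_le_mul (by omega) (le_refl m)
    have he : (p + 1) * m = p * m + m := by ring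
    omega
  have huq : q * m + m ≤ 2 * (g + 1) * m := by
    have : (q + 1) * m ≤ 2 * (g + 1) * m := Nat.mul_le_mul (by omega) (le_refl m)
    have he : (q + 1) * m = q * m + m := by ring
    omega
  rcases mod_eq_cases hm (by omega) (by omega) h with h0 | ⟨h0, h0'⟩ | ⟨h0, h0'⟩
  · rcases lt_or_gt_of_ne hpq with hlt | hlt
    · have hle : (p + 2) * m ≤ q * m := Nat.mul_le_mul (by omega) (le_refl m)
      have he : (p + 2) * m = p * m + 2 * m := by ring
      omega
    · have hle : (q + 2) * m ≤ p * m := Nat.mul_le_mul (by omega) (le_refl m)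
      have he : (q + 2) * m = q * m + 2 * m := by ring
      omega
  · -- p * m + r1 = 2(g+1)m and q * m + r2 = 0
    have hq0 : q = 0 := by
      have hqm : q * m = 0 := by omega
      rcases Nat.mul_eq_zero.mp hqm with h' | h' <;> omega
    have hp0 : p = 2 * (g + 1) - 1 := by
      by_contra hc
      have hle : (p + 2) * m ≤ 2 * (g + 1) * m := Nat.mul_le_mul (by omega) (le_refl m)
      have he : (p + 2) * m = p * m + 2 * m := by ring
      omega
    exact h3 ⟨hp0, hq0⟩
  · have hp0 : p = 0 := by
      have hpm : p * m = 0 := by omega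
      rcases Nat.mul_eq_zero.mp hpm with h' | h' <;> omega
    have hq0 : q = 2 * (g + 1) - 1 := by
      by_contra hc
      have hle : (q + 2) * m ≤ 2 * (g + 1) * m := Nat.mul_le_mul (by omega) (le_refl m)
      have he : (q + 2) * m = q * m + 2 * m := by ring
      omega
    exact h4 ⟨hq0, hp0⟩


omit hm in
lemma nodup_shape {α : Type*} {A B : List α} {x y : α}
    (hA : A.Nodup) (hB : B.Nodup) (hAB : ∀ a ∈ A, a ∉ B)
    (hxA : x ∉ A) (hxB : x ∉ B) (hyA : y ∉ A) (hyB : y ∉ B) (hxy : x ≠ y) :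
    ((A ++ x :: B) ++ [y]).Nodup := by
  rw [List.nodup_append, List.nodup_append, List.nodup_cons]
  refine ⟨⟨hA, ⟨hxB, hB⟩, ?_⟩, List.nodup_singleton _, ?_⟩
  · intro a haA b haB hab
    subst hab
    rcases List.mem_cons.mp haB with rfl | haB
    · exact hxA haA
    · exact hAB a haA haB
  · intro a ha b hb hab
    rw [List.mem_singleton] at hb
    subst hb
    subst hab
    rcases List.mem_append.mp ha with h | h
    · exact hyA h
    · rcases List.mem_cons.mp h with rfl | h
      · exact hxy rfl
      · exact hyB h

lemma templateA (hg : 1 ≤ g) (p : ℕ) :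
    ∃ (w : Fin (2 * (g + 1) * m) ⊕ Fin 2) (c : (HGraph g m).Walk w w),
      c.IsCycle ∧ c.length = 2 * m + 2 ∧
        ∀ r ≤ 2 * m, vtx g m hm (p * m + r) ∈ c.support := by
  have h2m : 2 * m < 2 * (g + 1) * m := by have := n_ge_4m hm hg; omega
  have hadj2 : (HGraph g m).Adj (vtx g m hm (p * m + 2 * m)) (hub g m p) := by
    have h := (adj_hub (g := g) hm (p + 2)).symm
    rw [show (p + 2) * m = p * m + 2 * m from by ring] at h
    rwa [show hub g m (p + 2) = hub g m p from hub_eq_iff hm |>.mpr (by omega)] at h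
  refine ⟨hub g m p, SimpleGraph.Walk.cons (adj_hub hm p)
    ((arcWalk g m hm (p * m) (2 * m)).concat hadj2), ?_, ?_, ?_⟩
  · rw [SimpleGraph.Walk.cons_isCycle_iff]
    constructor
    · rw [SimpleGraph.Walk.isPath_def, SimpleGraph.Walk.support_concat, support_arcWalk]
      refine List.Nodup.append (nodup_window hm _ h2m) (List.nodup_singleton _) ?_
      intro a ha hb
      rw [List.mem_singleton] at hb
      subst hb
      exact hub_not_mem_window hm p _ _ ha
    · intro hmem
      rw [SimpleGraph.Walk.edges_concat, List.concat_eq_append, List.mem_append,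
        List.mem_singleton] at hmem
      rcases hmem with hmem | hmem
      · have hsup := SimpleGraph.Walk.fst_mem_support_of_mem_edges _ hmem
        rw [support_arcWalk] at hsup
        exact hub_not_mem_window hm p _ _ hsup
      · rw [Sym2.eq_iff] at hmem
        rcases hmem with ⟨hh, -⟩ | ⟨-, hh⟩
        · exact vtx_ne_hub hm _ _ hh.symm
        · have h0 : (0 : ℕ) = 2 * m :=
            vtx_window_inj hm (x := p * m) (npos hm) h2m hh
          omega
  · simp [SimpleGraph.Walk.length_concat, length_arcWalk]
  · intro r hr
    rw [SimpleGraph.Walk.support_cons, SimpleGraph.Walk.support_concat, support_arcWalk]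
    exact List.mem_cons_of_mem _ (List.mem_append.mpr (Or.inl (mem_window hm hr)))

lemma templateB_core (hg : 1 ≤ g) {p q : ℕ} (hp : p < 2 * (g + 1)) (hq : q < 2 * (g + 1))
    (hpq : p ≠ q) (h1 : q ≠ p + 1) (h2 : p ≠ q + 1)
    (h3 : ¬(p = 2 * (g + 1) - 1 ∧ q = 0)) (h4 : ¬(q = 2 * (g + 1) - 1 ∧ p = 0))
    {z1 z2 : ℕ}
    (ha1 : (HGraph g m).Adj (hub g m (p + 1)) (vtx g m hm z1))
    (ha2 : (HGraph g m).Adj (vtx g m hm z2) (hub g m p))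
    (W2 : (HGraph g m).Walk (vtx g m hm z1) (vtx g m hm z2))
    (hlen : W2.length = m)
    (hperm : W2.support.Perm ((List.range (m + 1)).map (fun r => vtx g m hm (q * m + r)))) :
    ∃ (w : Fin (2 * (g + 1) * m) ⊕ Fin 2) (c : (HGraph g m).Walk w w),
      c.IsCycle ∧ c.length = 2 * m + 4 ∧
        (∀ r ≤ m, vtx g m hm (p * m + r) ∈ c.support) ∧
        (∀ r ≤ m, vtx g m hm (q * m + r) ∈ c.support) := by
  have hmn : m < 2 * (g + 1) * m := by have := n_ge_2m hm (g := g); omega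
  have hW2nodup : W2.support.Nodup := hperm.nodup_iff.mpr (nodup_window hm _ hmn)
  have hW2mem : ∀ a ∈ W2.support, a ∈ (List.range (m + 1)).map (fun r => vtx g m hm (q * m + r)) :=
    fun a ha => hperm.subset ha
  have hdisj : ∀ a ∈ (List.range (m + 1)).map (fun r => vtx g m hm (p * m + r)),
      a ∉ W2.support := by
    intro a haP haW
    rw [List.mem_map] at haP
    obtain ⟨r1, hr1, rfl⟩ := haP
    rw [List.mem_range] at hr1
    have haW' := hW2mem _ haW
    rw [List.mem_map] at haW'
    obtain ⟨r2, hr2, heq⟩ := haW'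
    rw [List.mem_range] at hr2
    exact windows_disjoint hm hp hq hpq h1 h2 h3 h4 (by omega) (by omega) heq.symm
  have hhub1W2 : hub g m (p + 1) ∉ W2.support :=
    fun h => hub_not_mem_window hm (p + 1) _ _ (hW2mem _ h)
  have hhubpW2 : hub g m p ∉ W2.support :=
    fun h => hub_not_mem_window hm p _ _ (hW2mem _ h)
  have hhubne : hub g m (p + 1) ≠ hub g m p := by
    rw [Ne, hub_eq_iff hm]; omega
  have hAdjA : (HGraph g m).Adj (vtx g m hm (p * m + m)) (hub g m (p + 1)) := by
    have h := (adj_hub (g := g) hm (p + 1)).symm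
    rwa [show (p + 1) * m = p * m + m from by ring] at h
  set P : (HGraph g m).Walk (vtx g m hm (p * m)) (hub g m p) :=
    ((arcWalk g m hm (p * m) m).append
      (SimpleGraph.Walk.cons hAdjA (SimpleGraph.Walk.cons ha1 W2))).concat ha2 with hP
  have hsupP : P.support =
      (((List.range (m + 1)).map (fun r => vtx g m hm (p * m + r)))
        ++ hub g m (p + 1) :: W2.support) ++ [hub g m p] := by
    rw [hP, SimpleGraph.Walk.support_concat, SimpleGraph.Walk.support_append, support_arcWalk,
      SimpleGraph.Walk.support_cons, SimpleGraph.Walk.support_cons,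
      List.tail_cons]
  have hedgP : P.edges =
      ((arcWalk g m hm (p * m) m).edges
        ++ s(vtx g m hm (p * m + m), hub g m (p + 1))
            :: s(hub g m (p + 1), vtx g m hm z1) :: W2.edges)
        ++ [s(vtx g m hm z2, hub g m p)] := by
    rw [hP, SimpleGraph.Walk.edges_concat, SimpleGraph.Walk.edges_append,
      SimpleGraph.Walk.edges_cons, SimpleGraph.Walk.edges_cons, List.concat_eq_append]
  refine ⟨hub g m p, SimpleGraph.Walk.cons (adj_hub hm p) P, ?_, ?_, ?_, ?_⟩
  · rw [SimpleGraph.Walk.cons_isCycle_iff]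
    constructor
    · rw [SimpleGraph.Walk.isPath_def, hsupP]
      exact nodup_shape (nodup_window hm _ hmn) hW2nodup hdisj
        (hub_not_mem_window hm _ _ _) hhub1W2 (hub_not_mem_window hm _ _ _) hhubpW2 hhubne
    · intro hmem
      rw [hedgP, List.mem_append, List.mem_append, List.mem_singleton, List.mem_cons,
        List.mem_cons] at hmem
      rcases hmem with (hmem | hmem | hmem | hmem) | hmem
      · have hsup := SimpleGraph.Walk.fst_mem_support_of_mem_edges _ hmem
        rw [support_arcWalk] at hsup
        exact hub_not_mem_window hm p _ _ hsup
      · rw [Sym2.eq_iff] at hmem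
        rcases hmem with ⟨hh, -⟩ | ⟨hh, -⟩
        · exact vtx_ne_hub hm _ _ hh.symm
        · exact hhubne hh.symm
      · rw [Sym2.eq_iff] at hmem
        rcases hmem with ⟨hh, -⟩ | ⟨-, hh⟩
        · exact hhubne hh.symm
        · exact vtx_ne_hub hm _ _ hh
      · have hsup := SimpleGraph.Walk.fst_mem_support_of_mem_edges _ hmem
        exact hhubpW2 hsup
      · rw [Sym2.eq_iff] at hmem
        rcases hmem with ⟨hh, -⟩ | ⟨-, hh⟩
        · exact vtx_ne_hub hm _ _ hh.symm
        · have hz2 : vtx g m hm z2 ∈ W2.support := SimpleGraph.Walk.end_mem_support W2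
          have hz2' := hW2mem _ hz2
          rw [List.mem_map] at hz2'
          obtain ⟨r2, hr2, heq⟩ := hz2'
          rw [List.mem_range] at hr2
          exact windows_disjoint hm (r1 := 0) hp hq hpq h1 h2 h3 h4 (by omega) (by omega)
            (hh.trans heq.symm)
  · rw [SimpleGraph.Walk.length_cons, hP, SimpleGraph.Walk.length_concat,
      SimpleGraph.Walk.length_append, SimpleGraph.Walk.length_cons,
      SimpleGraph.Walk.length_cons, length_arcWalk, hlen]
    ring
  · intro r hr
    rw [SimpleGraph.Walk.support_cons, hsupP]
    exact List.mem_cons_of_mem _ (List.mem_append.mpr (Or.inl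
      (List.mem_append.mpr (Or.inl (mem_window hm hr)))))
  · intro r hr
    rw [SimpleGraph.Walk.support_cons, hsupP]
    refine List.mem_cons_of_mem _ (List.mem_append.mpr (Or.inl
      (List.mem_append.mpr (Or.inr (List.mem_cons_of_mem _ ?_)))))
    exact hperm.mem_iff.mpr (mem_window hm hr)

lemma templateB (hg : 1 ≤ g) {p q : ℕ} (hp : p < 2 * (g + 1)) (hq : q < 2 * (g + 1))
    (hpq : p ≠ q) (h1 : q ≠ p + 1) (h2 : p ≠ q + 1)
    (h3 : ¬(p = 2 * (g + 1) - 1 ∧ q = 0)) (h4 : ¬(q = 2 * (g + 1) - 1 ∧ p = 0)) :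
    ∃ (w : Fin (2 * (g + 1) * m) ⊕ Fin 2) (c : (HGraph g m).Walk w w),
      c.IsCycle ∧ c.length = 2 * m + 4 ∧
        (∀ r ≤ m, vtx g m hm (p * m + r) ∈ c.support) ∧
        (∀ r ≤ m, vtx g m hm (q * m + r) ∈ c.support) := by
  by_cases hpar : (p + 1) % 2 = q % 2
  · have ha1 : (HGraph g m).Adj (hub g m (p + 1)) (vtx g m hm (q * m)) := by
      rw [show hub g m (p + 1) = hub g m q from hub_eq_iff hm |>.mpr hpar]
      exact adj_hub hm q
    have ha2 : (HGraph g m).Adj (vtx g m hm (q * m + m)) (hub g m p) := by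
      have h := (adj_hub (g := g) hm (q + 1)).symm
      rw [show (q + 1) * m = q * m + m from by ring] at h
      rwa [show hub g m (q + 1) = hub g m p from hub_eq_iff hm |>.mpr (by omega)] at h
    exact templateB_core hm hg hp hq hpq h1 h2 h3 h4 ha1 ha2
      (arcWalk g m hm (q * m) m) (length_arcWalk hm _ _)
      (by rw [support_arcWalk])
  · have hpar' : (p + 1) % 2 = (q + 1) % 2 := by omega
    have ha1 : (HGraph g m).Adj (hub g m (p + 1)) (vtx g m hm (q * m + m)) := by
      have h := adj_hub (g := g) hm (q + 1)
      rw [show (q + 1) * m = q * m + m from by ring] at h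
      rwa [show hub g m (q + 1) = hub g m (p + 1) from hub_eq_iff hm |>.mpr (by omega)] at h
    have ha2 : (HGraph g m).Adj (vtx g m hm (q * m)) (hub g m p) := by
      have h := (adj_hub (g := g) hm q).symm
      rwa [show hub g m q = hub g m p from hub_eq_iff hm |>.mpr (by omega)] at h
    exact templateB_core hm hg hp hq hpq h1 h2 h3 h4 ha1 ha2
      (arcWalk g m hm (q * m) m).reverse
      (by rw [SimpleGraph.Walk.length_reverse, length_arcWalk])
      (by rw [SimpleGraph.Walk.support_reverse, support_arcWalk]
          exact List.reverse_perm _)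

end Stmt14

open Stmt14 in
/-- For `g ≥ 1`, `m ≥ 2`, if `x = u_s` and `y = u_t` are vertices of the
outer cycle of `H(g, m)` whose distance along that cycle,
`min |s - t| (2(g+1)m - |s - t|)`, is greater than `m`, then some cycle of `H(g, m)` of
length at most `2m + 4` contains both `x` and `y`. (Here `|s - t|` is expressed in `ℕ` as
`(s - t) + (t - s)` using truncated subtraction.) -/
theorem stmt14 (g m : ℕ) (hg : 1 ≤ g) (hm : 2 ≤ m)
    (s t : Fin (2 * (g + 1) * m))
    (hfar : m < min (((s : ℕ) - (t : ℕ)) + ((t : ℕ) - (s : ℕ)))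
      (2 * (g + 1) * m - ((((s : ℕ) - (t : ℕ)) + ((t : ℕ) - (s : ℕ)))))) :
    ∃ (w : Fin (2 * (g + 1) * m) ⊕ Fin 2) (c : (HGraph g m).Walk w w),
      c.IsCycle ∧ c.length ≤ 2 * m + 4 ∧
        Sum.inl s ∈ c.support ∧ Sum.inl t ∈ c.support := by
  have hm1 : 1 ≤ m := by omega
  rw [lt_min_iff] at hfar
  obtain ⟨hfar1, hfar2⟩ := hfar
  obtain ⟨p, rs, hs_eq, hrs⟩ : ∃ p r, p * m + r = (s : ℕ) ∧ r < m :=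
    ⟨(s : ℕ) / m, (s : ℕ) % m, by rw [Nat.mul_comm]; exact Nat.div_add_mod _ m,
      Nat.mod_lt _ (by omega)⟩
  obtain ⟨q, rt, ht_eq, hrt⟩ : ∃ q r, q * m + r = (t : ℕ) ∧ r < m :=
    ⟨(t : ℕ) / m, (t : ℕ) % m, by rw [Nat.mul_comm]; exact Nat.div_add_mod _ m,
      Nat.mod_lt _ (by omega)⟩
  have hslt := s.isLt
  have htlt := t.isLt
  have hp : p < 2 * (g + 1) := by
    by_contra hc
    push_neg at hc
    have h2 := Nat.mul_le_mul hc (le_refl m)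
    omega
  have hq : q < 2 * (g + 1) := by
    by_contra hc
    push_neg at hc
    have h2 := Nat.mul_le_mul hc (le_refl m)
    omega
  have hinls : Sum.inl s = vtx g m hm1 (p * m + rs) := by rw [hs_eq, vtx_coe hm1]
  have hinlt : Sum.inl t = vtx g m hm1 (q * m + rt) := by rw [ht_eq, vtx_coe hm1]
  by_cases hpq : p = q
  · exfalso
    subst hpq
    omega
  by_cases hcase1 : q = p + 1 ∨ (p = 2 * (g + 1) - 1 ∧ q = 0)
  · obtain ⟨w, c, hcyc, hlen, hmem⟩ := templateA hm1 hg p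
    refine ⟨w, c, hcyc, by omega, ?_, ?_⟩
    · rw [hinls]; exact hmem rs (by omega)
    · rcases hcase1 with hc1 | ⟨hcp, hcq⟩
      · have ht2 : Sum.inl t = vtx g m hm1 (p * m + (m + rt)) := by
          rw [show p * m + (m + rt) = (t : ℕ) from by
            have he : (p + 1) * m = p * m + m := by ring
            subst hc1
            omega, vtx_coe hm1]
        rw [ht2]; exact hmem (m + rt) (by omega)
      · have hnn : p * m + m = 2 * (g + 1) * m := by
          have h' : (p + 1) * m = 2 * (g + 1) * m := by
            rw [show p + 1 = 2 * (g + 1) from by omega]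
          have he : (p + 1) * m = p * m + m := by ring
          omega
        rw [hcq] at ht_eq
        have ht2 : Sum.inl t = vtx g m hm1 (p * m + (m + rt)) := by
          rw [← vtx_coe hm1 t, vtx_eq_iff hm1,
            show p * m + (m + rt) = 2 * (g + 1) * m + rt from by omega, Nat.add_mod_left]
          have hrr : rt = (t : ℕ) := by omega
          rw [hrr]
        rw [ht2]; exact hmem (m + rt) (by omega)
  by_cases hcase2 : p = q + 1 ∨ (q = 2 * (g + 1) - 1 ∧ p = 0)
  · obtain ⟨w, c, hcyc, hlen, hmem⟩ := templateA hm1 hg q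
    refine ⟨w, c, hcyc, by omega, ?_, ?_⟩
    · rcases hcase2 with hc1 | ⟨hcq', hcp'⟩
      · have hs2 : Sum.inl s = vtx g m hm1 (q * m + (m + rs)) := by
          rw [show q * m + (m + rs) = (s : ℕ) from by
            have he : (q + 1) * m = q * m + m := by ring
            subst hc1
            omega, vtx_coe hm1]
        rw [hs2]; exact hmem (m + rs) (by omega)
      · have hnn : q * m + m = 2 * (g + 1) * m := by
          have h' : (q + 1) * m = 2 * (g + 1) * m := by
            rw [show q + 1 = 2 * (g + 1) from by omega]
          have he : (q + 1) * m = q * m + m := by ring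
          omega
        rw [hcp'] at hs_eq
        have hs2 : Sum.inl s = vtx g m hm1 (q * m + (m + rs)) := by
          rw [← vtx_coe hm1 s, vtx_eq_iff hm1,
            show q * m + (m + rs) = 2 * (g + 1) * m + rs from by omega, Nat.add_mod_left]
          have hrr : rs = (s : ℕ) := by omega
          rw [hrr]
        rw [hs2]; exact hmem (m + rs) (by omega)
    · rw [hinlt]; exact hmem rt (by omega)
  · push_neg at hcase1 hcase2
    obtain ⟨w, c, hcyc, hlen, hmem1, hmem2⟩ :=
      templateB hm1 hg hp hq hpq hcase1.1 hcase2.1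
        (by intro h; exact hcase1.2 h.1 h.2) (by intro h; exact hcase2.2 h.1 h.2)
    refine ⟨w, c, hcyc, by omega, ?_, ?_⟩
    · rw [hinls]; exact hmem1 rs (by omega)
    · rw [hinlt]; exact hmem2 rt (by omega)
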